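/- arXiv:1810.02384 — 2 statements merged into one kernel-verified Lean document; each statement's English description precedes it below -/
import Mathlib

section
/- Let (T_n) be a scale with factors (κ_n) and for n ≥ 1 let A_n = [T_n/3, T_n/3 + T_{n-1} − 1] ∩ ℕ. Define R_∞ = ⋃_{n≥1} (A_n + T_n ℕ). Then R_∞ is a rational subset of ℕ: for every ε > 0 there is a finite union of arithmetic progressions Q with d̄(R_∞ △ Q) < ε. -/
open Filter

/-- Upper asymptotic density of a set of naturals. -/
noncomputable def upperDensity (A : Set ℕ) : ℝ :=
  Filter.limsup (fun N => (Nat.card ↥(A ∩ Set.Iio N) : ℝ) / N) Filter.atTop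

/-- The arithmetic progression `a + bℕ`. -/
def AP (a b : ℕ) : Set ℕ := {n | ∃ k, n = a + b * k}

/-- `B` is a finite union of arithmetic progressions (with nonzero common differences). -/
def FinUnionAP (B : Set ℕ) : Prop :=
  ∃ s : Finset (ℕ × ℕ), (∀ p ∈ s, 1 ≤ p.2) ∧ B = ⋃ p ∈ s, AP p.1 p.2

/-- `A ⊆ ℕ` is a rational set: it can be approximated arbitrarily well in the
`d̄`-pseudometric by finite unions of arithmetic progressions. -/
def IsRationalSet (A : Set ℕ) : Prop :=
  ∀ ε : ℝ, 0 < ε → ∃ B : Set ℕ, FinUnionAP B ∧ upperDensity (symmDiff A B) < ε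

/-- `(T, κ)` is a scale. -/
structure IsScale (T κ : ℕ → ℕ) : Prop where
  kappa_zero : κ 0 = 3
  kappa_dvd : ∀ n, 3 * κ n ∣ κ (n + 1)
  T_zero_dvd : 3 ∣ T 0
  T_zero_pos : 0 < T 0
  T_succ : ∀ n, T (n + 1) = κ (n + 1) * T n
  ratio_tendsto : Filter.Tendsto (fun n => (κ (n + 1) : ℝ) / κ n) Filter.atTop Filter.atTop

/-- The set `A_n + T_n ℕ` where `A_n = [T_n/3, T_n/3 + T_{n-1} - 1] ∩ ℕ`. -/
def progBlock (T : ℕ → ℕ) (n : ℕ) : Set ℕ :=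
  {m | ∃ a ∈ Set.Ico (T n / 3) (T n / 3 + T (n - 1)), ∃ k, m = a + T n * k}

/-- The tail `R_∞ = ⋃_{n ≥ 1} (A_n + T_n ℕ)`. -/
def Rinfty (T : ℕ → ℕ) : Set ℕ := ⋃ n : ℕ, progBlock T (n + 1)

section Aux
variable {T κ : ℕ → ℕ}

lemma scale_kappa_pos (h : IsScale T κ) : ∀ n, 0 < κ n := by
  by_contra hc
  push_neg at hc
  obtain ⟨n, hn⟩ := hc
  have hn0 : κ n = 0 := Nat.le_zero.mp hn
  have hall : ∀ m, n ≤ m → κ m = 0 := by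
    intro m hm
    induction m, hm using Nat.le_induction with
    | base => exact hn0
    | succ m hm ih =>
      have := h.kappa_dvd m
      rw [ih, Nat.mul_zero, zero_dvd_iff] at this
      exact this
  have h1 : ∀ᶠ m in atTop, (κ (m + 1) : ℝ) / κ m = 0 := by
    filter_upwards [eventually_ge_atTop n] with m hm
    rw [hall (m + 1) (by omega)]
    simp
  have h2 : ∀ᶠ m in atTop, (1 : ℝ) ≤ (κ (m + 1) : ℝ) / κ m :=
    h.ratio_tendsto.eventually_ge_atTop 1
  obtain ⟨m, hm1, hm2⟩ := (h1.and h2).exists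
  rw [hm1] at hm2
  linarith

lemma scale_kappa_ge (h : IsScale T κ) : ∀ n, 3 ^ (n + 1) ≤ κ n := by
  intro n
  induction n with
  | zero => simp [h.kappa_zero]
  | succ n ih =>
    have hd := h.kappa_dvd n
    have hle : 3 * κ n ≤ κ (n + 1) :=
      Nat.le_of_dvd (scale_kappa_pos h (n + 1)) hd
    calc 3 ^ (n + 2) = 3 * 3 ^ (n + 1) := by ring
    _ ≤ 3 * κ n := by omega
    _ ≤ κ (n + 1) := hle

lemma scale_T_pos (h : IsScale T κ) : ∀ n, 0 < T n := by
  intro n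
  induction n with
  | zero => exact h.T_zero_pos
  | succ n ih =>
    rw [h.T_succ n]
    exact Nat.mul_pos (scale_kappa_pos h (n + 1)) ih

lemma scale_T_ge (h : IsScale T κ) : ∀ n, 3 ^ n ≤ T n := by
  intro n
  induction n with
  | zero => simpa using Nat.one_le_iff_ne_zero.mpr h.T_zero_pos.ne'
  | succ n ih =>
    rw [h.T_succ n]
    have h1 : 3 ≤ κ (n + 1) :=
      le_trans (by calc (3:ℕ) = 3 ^ 1 := (pow_one 3).symm
        _ ≤ 3 ^ (n + 2) := Nat.pow_le_pow_right (by norm_num) (by omega))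
      (scale_kappa_ge h (n + 1))
    calc 3 ^ (n + 1) = 3 * 3 ^ n := by ring
    _ ≤ κ (n + 1) * T n := Nat.mul_le_mul h1 ih

lemma scale_T_dvd3 (h : IsScale T κ) : ∀ n, 3 ∣ T n := by
  intro n
  induction n with
  | zero => exact h.T_zero_dvd
  | succ n ih => rw [h.T_succ n]; exact ih.mul_left _

lemma scale_T_eq (h : IsScale T κ) {n : ℕ} (hn : 1 ≤ n) : T n = κ n * T (n - 1) := by
  obtain ⟨m, rfl⟩ : ∃ m, n = m + 1 := ⟨n - 1, by omega⟩
  simpa using h.T_succ m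

end Aux

def blockFin (T : ℕ → ℕ) (n X : ℕ) : Finset ℕ :=
  ((Finset.Ico (T n / 3) (T n / 3 + T (n - 1))) ×ˢ Finset.range (X / T n + 1)).image
    (fun p => p.1 + T n * p.2)

lemma blockFin_card (T : ℕ → ℕ) (n X : ℕ) :
    (blockFin T n X).card ≤ T (n - 1) * (X / T n + 1) := by
  refine Finset.card_image_le.trans ?_
  rw [Finset.card_product, Nat.card_Ico, Finset.card_range, Nat.add_sub_cancel_left]

lemma mem_blockFin {T : ℕ → ℕ} {n X m : ℕ} (hT : 0 < T n)
    (hm : m ∈ progBlock T n) (hX : m < X) : m ∈ blockFin T n X := by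
  obtain ⟨a, ha, k, rfl⟩ := hm
  refine Finset.mem_image.mpr ⟨(a, k), ?_, rfl⟩
  simp only [Finset.mem_product, Finset.mem_Ico, Finset.mem_range]
  refine ⟨⟨ha.1, ha.2⟩, ?_⟩
  have h2 : k ≤ X / T n := (Nat.le_div_iff_mul_le hT).mpr (by rw [Nat.mul_comm]; omega)
  omega

lemma progBlock_lb {T : ℕ → ℕ} {n m : ℕ} (hm : m ∈ progBlock T n) : T n / 3 ≤ m := by
  obtain ⟨a, ha, k, rfl⟩ := hm
  exact ha.1.trans (Nat.le_add_right _ _)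


/-- The tail `R_∞` is a rational subset of `ℕ`. -/
theorem rinfty_isRational (T κ : ℕ → ℕ) (h : IsScale T κ) :
    IsRationalSet (Rinfty T) := by
  intro ε hε
  obtain ⟨N, hN⟩ : ∃ N : ℕ, (2 : ℝ) * (1 / 3) ^ N < ε := by
    obtain ⟨N, hN⟩ := exists_pow_lt_of_lt_one (x := ε / 2) (y := (1 / 3 : ℝ))
      (by linarith) (by norm_num)
    exact ⟨N, by linarith⟩
  have hTpos := scale_T_pos h
  set B : Set ℕ := ⋃ n ∈ Finset.Ico 1 (N + 1), progBlock T n with hBdef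
  refine ⟨B, ?_, ?_⟩
  · refine ⟨(Finset.Ico 1 (N + 1)).biUnion
      (fun n => (Finset.Ico (T n / 3) (T n / 3 + T (n - 1))).image (fun a => (a, T n))), ?_, ?_⟩
    · intro p hp
      simp only [Finset.mem_biUnion, Finset.mem_image] at hp
      obtain ⟨n, _, a, _, rfl⟩ := hp
      exact hTpos n
    · ext m
      simp only [hBdef, Set.mem_iUnion, Finset.mem_biUnion, Finset.mem_image, AP,
        progBlock, Set.mem_setOf_eq, Finset.mem_Ico, Set.mem_Ico, exists_prop]
      constructor
      · rintro ⟨n, hn, a, ha, k, rfl⟩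
        exact ⟨(a, T n), ⟨n, hn, a, ha, rfl⟩, k, rfl⟩
      · rintro ⟨p, ⟨n, hn, a, ha, rfl⟩, k, rfl⟩
        exact ⟨n, hn, a, ha, k, rfl⟩
  · have hBsub : B ⊆ Rinfty T := by
      intro m hm
      rw [hBdef] at hm
      simp only [Set.mem_iUnion, exists_prop, Finset.mem_Ico, Finset.mem_coe] at hm
      obtain ⟨n, hn, hm⟩ := hm
      refine Set.mem_iUnion.mpr ⟨n - 1, ?_⟩
      have hne : n - 1 + 1 = n := by omega
      rw [hne]
      exact hm
    have hsymm : symmDiff (Rinfty T) B = Rinfty T \ B := by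
      rw [symmDiff_comm, symmDiff_of_le hBsub]
    rw [hsymm]
    have hkey : ∀ X : ℕ, 1 ≤ X →
        (Nat.card ↥((Rinfty T \ B) ∩ Set.Iio X) : ℝ) / X ≤ 2 * (1 / 3) ^ N := by
      intro X hX
      set idx : Finset ℕ := (Finset.Ico (N + 1) (3 * X)).filter (fun n => T n < 3 * X) with hidx
      have hsub : (Rinfty T \ B) ∩ Set.Iio X ⊆ ↑(idx.biUnion (fun n => blockFin T n X)) := by
        rintro m ⟨⟨hmR, hmB⟩, hmX⟩
        obtain ⟨j, hj⟩ := Set.mem_iUnion.mp hmR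
        have hmX' : m < X := hmX
        have hn1 : N + 1 ≤ j + 1 := by
          by_contra hc
          push_neg at hc
          apply hmB
          rw [hBdef]
          refine Set.mem_iUnion.mpr ⟨j + 1, ?_⟩
          refine Set.mem_iUnion.mpr ⟨?_, hj⟩
          simp only [Finset.mem_Ico]
          omega
        have hTm : T (j + 1) / 3 ≤ m := progBlock_lb hj
        have hdvd := scale_T_dvd3 h (j + 1)
        have hTlt : T (j + 1) < 3 * X := by omega
        have hnlt : j + 1 < 3 * X := by
          have h1 : j + 1 < 3 ^ (j + 1) := Nat.lt_pow_self (by norm_num)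
          have h2 := scale_T_ge h (j + 1)
          omega
        refine Finset.mem_coe.mpr (Finset.mem_biUnion.mpr
          ⟨j + 1, ?_, mem_blockFin (hTpos _) hj hmX'⟩)
        rw [hidx, Finset.mem_filter, Finset.mem_Ico]
        exact ⟨⟨hn1, hnlt⟩, hTlt⟩
      have hcard : (Nat.card ↥((Rinfty T \ B) ∩ Set.Iio X)) ≤
          ∑ n ∈ idx, T (n - 1) * (X / T n + 1) := by
        calc Nat.card ↥((Rinfty T \ B) ∩ Set.Iio X)
            ≤ Nat.card ↥(↑(idx.biUnion (fun n => blockFin T n X)) : Set ℕ) :=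
              Nat.card_mono (Finset.finite_toSet _) hsub
        _ = (idx.biUnion (fun n => blockFin T n X)).card := by
              rw [Nat.card_coe_set_eq, Set.ncard_coe_finset]
        _ ≤ ∑ n ∈ idx, (blockFin T n X).card := Finset.card_biUnion_le
        _ ≤ ∑ n ∈ idx, T (n - 1) * (X / T n + 1) :=
              Finset.sum_le_sum (fun n _ => blockFin_card T n X)
      have hterm : ∀ n ∈ idx, ((T (n - 1) * (X / T n + 1) : ℕ) : ℝ) ≤
          4 * X * (1 / 3) ^ (n + 1) := by
        intro n hn
        rw [hidx, Finset.mem_filter, Finset.mem_Ico] at hn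
        obtain ⟨⟨hn1, _⟩, hT3X⟩ := hn
        have hn1' : 1 ≤ n := by omega
        have hTeq := scale_T_eq h hn1'
        have hκpos : (0 : ℝ) < κ n := by exact_mod_cast scale_kappa_pos h n
        have hTp : (0 : ℝ) < T n := by exact_mod_cast hTpos n
        have hTp' : (0 : ℝ) < T (n - 1) := by exact_mod_cast hTpos (n - 1)
        have hTeq' : (T n : ℝ) = κ n * T (n - 1) := by exact_mod_cast hTeq
        have hd : ((X / T n : ℕ) : ℝ) ≤ (X : ℝ) / T n := Nat.cast_div_le
        have e1 : (T (n - 1) : ℝ) * ((X / T n : ℕ) : ℝ) ≤ X / κ n := by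
          calc (T (n - 1) : ℝ) * ((X / T n : ℕ) : ℝ)
              ≤ T (n - 1) * ((X : ℝ) / T n) := mul_le_mul_of_nonneg_left hd hTp'.le
          _ = X / κ n := by rw [hTeq']; field_simp
        have e2 : (T (n - 1) : ℝ) ≤ 3 * X / κ n := by
          have hle : (T n : ℝ) ≤ 3 * X := by exact_mod_cast hT3X.le
          rw [hTeq'] at hle
          rw [le_div_iff₀ hκpos]
          nlinarith
        have e3 : (1 : ℝ) / κ n ≤ (1 / 3) ^ (n + 1) := by
          have h3 : ((3 : ℝ) ^ (n + 1)) ≤ κ n := by exact_mod_cast scale_kappa_ge h n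
          rw [one_div, div_pow, one_pow, one_div]
          exact inv_anti₀ (by positivity) h3
        have hX0 : (0 : ℝ) ≤ X := by positivity
        push_cast
        calc (T (n - 1) : ℝ) * (((X / T n : ℕ) : ℝ) + 1)
            = T (n - 1) * ((X / T n : ℕ) : ℝ) + T (n - 1) := by ring
        _ ≤ X / κ n + 3 * X / κ n := add_le_add e1 e2
        _ = 4 * X * (1 / κ n) := by ring
        _ ≤ 4 * X * (1 / 3) ^ (n + 1) := by
            exact mul_le_mul_of_nonneg_left e3 (by positivity)
      have hsum2 : ∑ n ∈ idx, (4 * (X : ℝ) * (1 / 3) ^ (n + 1)) ≤ 2 * (1 / 3) ^ N * X := by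
        have hf : idx ⊆ Finset.Ico (N + 1) (3 * X) := Finset.filter_subset _ _
        have h1 : ∑ n ∈ idx, (4 * (X : ℝ) * (1 / 3) ^ (n + 1)) ≤
            ∑ n ∈ Finset.Ico (N + 1) (3 * X), (4 * (X : ℝ) * (1 / 3) ^ (n + 1)) :=
          Finset.sum_le_sum_of_subset_of_nonneg hf (fun i _ _ => by positivity)
        have h2 : ∑ n ∈ Finset.Ico (N + 1) (3 * X), ((1 / 3 : ℝ)) ^ (n + 1) ≤
            (1 / 2) * (1 / 3) ^ N := by
          calc ∑ n ∈ Finset.Ico (N + 1) (3 * X), ((1 / 3 : ℝ)) ^ (n + 1)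
              = (∑ n ∈ Finset.Ico (N + 1) (3 * X), ((1 / 3 : ℝ)) ^ n) * (1 / 3) := by
                rw [Finset.sum_mul]
                exact Finset.sum_congr rfl (fun n _ => pow_succ _ _)
          _ ≤ ((1 / 3 : ℝ) ^ (N + 1) / (1 - 1 / 3)) * (1 / 3) :=
                mul_le_mul_of_nonneg_right
                  (geom_sum_Ico_le_of_lt_one (by norm_num) (by norm_num)) (by norm_num)
          _ ≤ (1 / 2) * (1 / 3) ^ N := by
                rw [pow_succ]
                have hp : (0 : ℝ) ≤ (1 / 3) ^ N := by positivity
                have heq : (1 / 3 : ℝ) ^ N * (1 / 3) / (1 - 1 / 3) * (1 / 3)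
                    = (1 / 6) * (1 / 3) ^ N := by ring
                rw [heq]
                linarith
        calc ∑ n ∈ idx, (4 * (X : ℝ) * (1 / 3) ^ (n + 1))
            ≤ ∑ n ∈ Finset.Ico (N + 1) (3 * X), (4 * (X : ℝ) * (1 / 3) ^ (n + 1)) := h1
        _ = 4 * X * ∑ n ∈ Finset.Ico (N + 1) (3 * X), ((1 / 3 : ℝ)) ^ (n + 1) := by
              rw [Finset.mul_sum]
        _ ≤ 4 * X * ((1 / 2) * (1 / 3) ^ N) :=
              mul_le_mul_of_nonneg_left h2 (by positivity)
        _ = 2 * (1 / 3) ^ N * X := by ring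
      have hXpos : (0 : ℝ) < X := by exact_mod_cast hX
      rw [div_le_iff₀ hXpos]
      calc (Nat.card ↥((Rinfty T \ B) ∩ Set.Iio X) : ℝ)
          ≤ ((∑ n ∈ idx, T (n - 1) * (X / T n + 1) : ℕ) : ℝ) := by exact_mod_cast hcard
      _ = ∑ n ∈ idx, ((T (n - 1) * (X / T n + 1) : ℕ) : ℝ) := Nat.cast_sum _ _
      _ ≤ ∑ n ∈ idx, (4 * (X : ℝ) * (1 / 3) ^ (n + 1)) := Finset.sum_le_sum hterm
      _ ≤ 2 * (1 / 3) ^ N * X := hsum2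
    have hub : upperDensity (Rinfty T \ B) ≤ 2 * (1 / 3) ^ N := by
      apply Filter.limsup_le_of_le
      · refine Filter.isCoboundedUnder_le_of_le atTop (x := 0) (fun X => ?_)
        positivity
      · filter_upwards [eventually_ge_atTop 1] with X hX1
        exact hkey X hX1
    exact lt_of_le_of_lt hub hN
end

section
/- With R_∞ = ⋃_{n≥1} (A_n + T_n ℕ) as above, the asymptotic density of R_∞ exists and satisfies 1/κ_1 ≤ d(R_∞) ≤ Σ_{n≥1} 1/κ_n < 1. In particular 0 < d(R_∞) < 1. -/
open Filter

/-- `A` has asymptotic density `d`. -/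
def HasDensity (A : Set ℕ) (d : ℝ) : Prop :=
  Filter.Tendsto (fun N => (Nat.card ↥(A ∩ Set.Iio N) : ℝ) / N) Filter.atTop (nhds d)

namespace DensityAux

/-- Counting function: number of elements of `A` below `N`. -/
noncomputable def cnt (A : Set ℕ) (N : ℕ) : ℕ := (A ∩ Set.Iio N).ncard

/-- `A` is periodic with period `p`. -/
def Per (A : Set ℕ) (p : ℕ) : Prop := ∀ m, m + p ∈ A ↔ m ∈ A

lemma fin_inter (A : Set ℕ) (N : ℕ) : (A ∩ Set.Iio N).Finite :=
  (Set.finite_Iio N).inter_of_right A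

lemma natCard_eq_cnt (A : Set ℕ) (N : ℕ) :
    (Nat.card ↥(A ∩ Set.Iio N)) = cnt A N := by
  rw [cnt, Nat.card_coe_set_eq]

lemma cnt_le_of (A B : Set ℕ) (N : ℕ) (h : ∀ m, m < N → m ∈ A → m ∈ B) :
    cnt A N ≤ cnt B N := by
  apply Set.ncard_le_ncard _ (fin_inter B N)
  rintro m ⟨hmA, hm⟩
  exact ⟨h m hm hmA, hm⟩

lemma cnt_mono (A : Set ℕ) {N M : ℕ} (h : N ≤ M) : cnt A N ≤ cnt A M := by
  apply Set.ncard_le_ncard _ (fin_inter A M)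
  rintro m ⟨hmA, hm⟩
  exact ⟨hmA, lt_of_lt_of_le hm h⟩

lemma cnt_union_le (A B : Set ℕ) (N : ℕ) :
    cnt (A ∪ B) N ≤ cnt A N + cnt B N := by
  have : (A ∪ B) ∩ Set.Iio N = (A ∩ Set.Iio N) ∪ (B ∩ Set.Iio N) := by
    ext m; simp [Set.mem_union]; tauto
  rw [cnt, this]
  exact Set.ncard_union_le _ _

lemma cnt_add_per {A : Set ℕ} {p : ℕ} (hA : Per A p) (N : ℕ) :
    cnt A (N + p) = cnt A p + cnt A N := by
  have hsplit : A ∩ Set.Iio (N + p) =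
      (A ∩ Set.Iio p) ∪ ((· + p) '' (A ∩ Set.Iio N)) := by
    ext m
    simp only [Set.mem_inter_iff, Set.mem_Iio, Set.mem_union, Set.mem_image]
    constructor
    · rintro ⟨hmA, hm⟩
      by_cases hmp : m < p
      · exact Or.inl ⟨hmA, hmp⟩
      · refine Or.inr ⟨m - p, ⟨?_, by omega⟩, by omega⟩
        have : m - p + p ∈ A := by rwa [Nat.sub_add_cancel (by omega)]
        exact (hA (m - p)).mp this
    · rintro (⟨hmA, hm⟩ | ⟨x, ⟨hxA, hx⟩, rfl⟩)
      · exact ⟨hmA, by omega⟩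
      · exact ⟨(hA x).mpr hxA, by omega⟩
  have hdisj : Disjoint (A ∩ Set.Iio p) ((· + p) '' (A ∩ Set.Iio N)) := by
    rw [Set.disjoint_left]
    rintro m ⟨_, hm⟩ ⟨x, _, rfl⟩
    simp only [Set.mem_Iio] at hm
    omega
  rw [cnt, hsplit, Set.ncard_union_eq hdisj (fin_inter A p)
      ((fin_inter A N).image _),
    Set.ncard_image_of_injective _ (add_left_injective p)]
  rfl

lemma cnt_mul_per {A : Set ℕ} {p : ℕ} (hA : Per A p) (k : ℕ) :
    cnt A (k * p) = k * cnt A p := by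
  induction k with
  | zero =>
    rw [Nat.zero_mul, Nat.zero_mul, cnt,
      show Set.Iio 0 = (∅ : Set ℕ) by ext m; simp]
    simp
  | succ k ih => rw [Nat.succ_mul, cnt_add_per hA, ih]; ring

lemma per_mul {A : Set ℕ} {p : ℕ} (hA : Per A p) (k : ℕ) : Per A (k * p) := by
  induction k with
  | zero => intro m; simp
  | succ k ih =>
    intro m
    have : m + (k + 1) * p = (m + k * p) + p := by ring
    rw [this, hA (m + k * p), ih m]

lemma per_of_dvd {A : Set ℕ} {p q : ℕ} (hA : Per A p) (hpq : p ∣ q) : Per A q := by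
  obtain ⟨k, rfl⟩ := hpq
  rw [mul_comm]
  exact per_mul hA k

lemma tendsto_cnt_per {A : Set ℕ} {p : ℕ} (hA : Per A p) (hp : 0 < p) :
    Tendsto (fun N => (cnt A N : ℝ) / N) atTop (nhds ((cnt A p : ℝ) / p)) := by
  set c := cnt A p with hc
  rw [Metric.tendsto_atTop]
  intro ε hε
  refine ⟨⌈(c : ℝ) / ε⌉₊ + 1, fun N hN => ?_⟩
  have hN1 : 1 ≤ N := le_trans (Nat.le_add_left 1 _) hN
  have hNpos : (0 : ℝ) < N := by exact_mod_cast hN1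
  have hppos : (0 : ℝ) < p := by exact_mod_cast hp
  have hub : N < (N / p + 1) * p := by
    calc N = p * (N / p) + N % p := (Nat.div_add_mod N p).symm
    _ < p * (N / p) + p := by have := Nat.mod_lt N hp; omega
    _ = (N / p + 1) * p := by ring
  have k1 : cnt A N ≤ (N / p + 1) * c := by
    calc cnt A N ≤ cnt A ((N / p + 1) * p) := cnt_mono A (le_of_lt hub)
    _ = (N / p + 1) * c := cnt_mul_per hA _
  have k2 : (N / p) * c ≤ cnt A N := by
    calc (N / p) * c = cnt A ((N / p) * p) := (cnt_mul_per hA _).symm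
    _ ≤ cnt A N := cnt_mono A (Nat.div_mul_le_self N p)
  have q1 : ((N / p : ℕ) : ℝ) * p ≤ N := by exact_mod_cast Nat.div_mul_le_self N p
  have q2 : (N : ℝ) < ((N / p : ℕ) : ℝ) * p + p := by exact_mod_cast hub |>.trans_eq (by push_cast; ring)
  have k1' : (cnt A N : ℝ) ≤ ((N / p : ℕ) + 1) * c := by exact_mod_cast k1
  have k2' : ((N / p : ℕ) : ℝ) * c ≤ cnt A N := by exact_mod_cast k2
  have hcnn : (0 : ℝ) ≤ c := Nat.cast_nonneg c
  have f1 : (c : ℝ) * N ≤ p * cnt A N + c * p := by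
    nlinarith [mul_le_mul_of_nonneg_left q2.le hcnn,
      mul_le_mul_of_nonneg_left k2' hppos.le]
  have f2 : (cnt A N : ℝ) * p ≤ c * N + c * p := by
    nlinarith [mul_le_mul_of_nonneg_right q1 hcnn,
      mul_le_mul_of_nonneg_right k1' hppos.le]
  have key : dist ((cnt A N : ℝ) / N) ((c : ℝ) / p) ≤ c / N := by
    rw [Real.dist_eq, abs_le]
    constructor
    · rw [neg_le, neg_sub, div_sub_div _ _ hppos.ne' hNpos.ne',
        div_le_div_iff₀ (by positivity) hNpos]
      nlinarith [mul_le_mul_of_nonneg_right f1 hNpos.le]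
    · rw [div_sub_div _ _ hNpos.ne' hppos.ne',
        div_le_div_iff₀ (by positivity) hNpos]
      nlinarith [mul_le_mul_of_nonneg_right f2 hNpos.le]
  refine lt_of_le_of_lt key ?_
  rw [div_lt_iff₀ hNpos]
  have : (c : ℝ) / ε < N := by
    have h1 : ((⌈(c : ℝ) / ε⌉₊ : ℝ) + 1) ≤ N := by exact_mod_cast hN
    have := Nat.le_ceil ((c : ℝ) / ε)
    linarith
  calc (c : ℝ) = (c / ε) * ε := by field_simp
  _ < N * ε := by exact mul_lt_mul_of_pos_right this hε
  _ = ε * N := by ring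



variable {T κ : ℕ → ℕ}

lemma kappa_pos (h : IsScale T κ) : ∀ n, 0 < κ n := by
  by_contra hc
  push_neg at hc
  obtain ⟨m, hm⟩ := hc
  have hm0 : κ m = 0 := by omega
  have h0 : ∀ j, κ (m + j) = 0 := by
    intro j
    induction j with
    | zero => exact hm0
    | succ j ih =>
      have := h.kappa_dvd (m + j)
      rw [ih, Nat.mul_zero] at this
      rw [← Nat.add_assoc] at *
      exact Nat.eq_zero_of_zero_dvd this
  obtain ⟨N, hN⟩ := eventually_atTop.mp (h.ratio_tendsto.eventually_ge_atTop 1)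
  have h1 := hN (max N m) (le_max_left _ _)
  have h2 : κ (max N m + 1) = 0 := by
    have := h0 (max N m + 1 - m)
    rwa [Nat.add_sub_cancel' (by omega : m ≤ max N m + 1)] at this
  rw [h2] at h1
  norm_num at h1

lemma kappa_ge (h : IsScale T κ) (n : ℕ) : 3 * κ n ≤ κ (n + 1) :=
  Nat.le_of_dvd (kappa_pos h (n + 1)) (h.kappa_dvd n)

lemma kappa_pow (h : IsScale T κ) : ∀ n, 3 ^ (n + 1) ≤ κ n := by
  intro n
  induction n with
  | zero => rw [h.kappa_zero]; norm_num
  | succ n ih =>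
    calc 3 ^ (n + 2) = 3 * 3 ^ (n + 1) := by ring
    _ ≤ 3 * κ n := by omega
    _ ≤ κ (n + 1) := kappa_ge h n

lemma kappa_three_dvd (h : IsScale T κ) (n : ℕ) : 3 ∣ κ (n + 1) :=
  dvd_trans (Dvd.intro _ rfl) (h.kappa_dvd n)

lemma T_pos (h : IsScale T κ) : ∀ n, 0 < T n := by
  intro n
  induction n with
  | zero => exact h.T_zero_pos
  | succ n ih => rw [h.T_succ]; exact Nat.mul_pos (kappa_pos h (n + 1)) ih

lemma T_three_dvd (h : IsScale T κ) : ∀ n, 3 ∣ T n := by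
  intro n
  induction n with
  | zero => exact h.T_zero_dvd
  | succ n ih => rw [h.T_succ]; exact Dvd.dvd.mul_left ih _

lemma T_le_succ (h : IsScale T κ) (n : ℕ) : T n ≤ T (n + 1) := by
  rw [h.T_succ]
  calc T n = 1 * T n := (Nat.one_mul _).symm
  _ ≤ κ (n + 1) * T n := Nat.mul_le_mul_right _ (kappa_pos h (n + 1))

lemma T_mono (h : IsScale T κ) : Monotone T :=
  monotone_nat_of_le_succ (T_le_succ h)

lemma T_dvd (h : IsScale T κ) {n m : ℕ} (hnm : n ≤ m) : T n ∣ T m := by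
  induction m with
  | zero => rw [Nat.le_zero.mp hnm]
  | succ m ih =>
    rcases Nat.lt_or_ge n (m + 1) with hlt | hge
    · rw [h.T_succ]
      exact (ih (by omega)).mul_left _
    · rw [Nat.le_antisymm hnm hge]
  -- done

lemma T_lin (h : IsScale T κ) : ∀ n, n + 1 ≤ T n := by
  intro n
  induction n with
  | zero => exact h.T_zero_pos
  | succ n ih =>
    rw [h.T_succ]
    have h9 : 3 ≤ κ (n + 1) :=
      le_trans (Nat.pow_le_pow_right (by norm_num) (by omega) :
        3 ^ 1 ≤ 3 ^ (n + 1 + 1)) (kappa_pow h (n + 1))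
    calc n + 2 ≤ 3 * (n + 1) := by omega
    _ ≤ κ (n + 1) * T n := Nat.mul_le_mul h9 ih

lemma T_div3 (h : IsScale T κ) (n : ℕ) : 3 * (T n / 3) = T n :=
  Nat.mul_div_cancel' (T_three_dvd h n)

lemma block_bound (h : IsScale T κ) (n : ℕ) :
    T (n + 1) / 3 + T n ≤ T (n + 1) := by
  obtain ⟨c, hc⟩ := kappa_three_dvd h n
  have hc3 : 3 ≤ c := by
    have h1 := kappa_pow h (n + 1)
    have h2 : 9 ≤ κ (n + 1) :=
      le_trans (Nat.pow_le_pow_right (by norm_num) (by omega) :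
        3 ^ 2 ≤ 3 ^ (n + 1 + 1)) h1
    omega
  have hdiv : T (n + 1) / 3 = c * T n := by
    rw [h.T_succ, hc, Nat.mul_assoc, Nat.mul_div_cancel_left _ (by norm_num)]
  rw [hdiv, h.T_succ, hc]
  have hTn := T_pos h n
  calc c * T n + T n = (c + 1) * T n := by ring
  _ ≤ (3 * c) * T n := Nat.mul_le_mul_right _ (by omega)


lemma block_lower {n m : ℕ} (hm : m ∈ progBlock T n) : T n / 3 ≤ m := by
  obtain ⟨a, ⟨ha1, _⟩, k, rfl⟩ := hm
  exact le_trans ha1 (Nat.le_add_right _ _)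

lemma per_block (h : IsScale T κ) (n : ℕ) :
    Per (progBlock T (n + 1)) (T (n + 1)) := by
  intro m
  constructor
  · rintro ⟨a, ha, k, hk⟩
    have haT : a < T (n + 1) := by
      have := ha.2
      simp only [Nat.add_sub_cancel] at this
      exact lt_of_lt_of_le this (block_bound h n)
    rcases k with _ | j
    · omega
    · refine ⟨a, ha, j, ?_⟩
      have hring : T (n + 1) * (j + 1) = T (n + 1) * j + T (n + 1) := by ring
      omega
  · rintro ⟨a, ha, k, rfl⟩
    exact ⟨a, ha, k + 1, by ring⟩

lemma block_inter (h : IsScale T κ) (n : ℕ) :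
    progBlock T (n + 1) ∩ Set.Iio (T (n + 1)) =
      Set.Ico (T (n + 1) / 3) (T (n + 1) / 3 + T n) := by
  ext m
  simp only [Set.mem_inter_iff, Set.mem_Iio, Set.mem_Ico, progBlock,
    Set.mem_setOf_eq, Set.mem_Ico, Nat.add_sub_cancel]
  constructor
  · rintro ⟨⟨a, ⟨ha1, ha2⟩, k, rfl⟩, hlt⟩
    have hk : k = 0 := by
      by_contra hk0
      have : T (n + 1) ≤ T (n + 1) * k := Nat.le_mul_of_pos_right _ (by omega)
      omega
    subst hk
    simpa using ⟨ha1, ha2⟩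
  · rintro ⟨h1, h2⟩
    exact ⟨⟨m, ⟨h1, h2⟩, 0, by ring⟩, lt_of_lt_of_le h2 (block_bound h n)⟩

lemma cnt_block (h : IsScale T κ) (n : ℕ) :
    cnt (progBlock T (n + 1)) (T (n + 1)) = T n := by
  rw [cnt, block_inter h n]
  rw [show Set.Ico (T (n + 1) / 3) (T (n + 1) / 3 + T n) =
    ↑(Finset.Ico (T (n + 1) / 3) (T (n + 1) / 3 + T n)) by simp]
  rw [Set.ncard_coe_finset, Nat.card_Ico]
  omega

lemma cnt_block_zero (h : IsScale T κ) {n N : ℕ} (hN : N ≤ T (n + 1) / 3) :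
    cnt (progBlock T (n + 1)) N = 0 := by
  rw [cnt, Set.ncard_eq_zero (fin_inter _ _)]
  ext m
  simp only [Set.mem_inter_iff, Set.mem_Iio, Set.mem_empty_iff_false, iff_false]
  rintro ⟨hm, hlt⟩
  have := block_lower hm
  omega

lemma cnt_block_le (h : IsScale T κ) (n N : ℕ) :
    κ (n + 1) * cnt (progBlock T (n + 1)) N ≤ 4 * N := by
  rcases le_or_gt N (T (n + 1) / 3) with hle | hlt
  · rw [cnt_block_zero h hle]; omega
  · set p := T (n + 1) with hp
    have hppos : 0 < p := T_pos h (n + 1)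
    have hp3N : p < 3 * N := by
      have := T_div3 h (n + 1)
      omega
    have hub : N < (N / p + 1) * p := by
      calc N = p * (N / p) + N % p := (Nat.div_add_mod N p).symm
      _ < p * (N / p) + p := by have := Nat.mod_lt N hppos; omega
      _ = (N / p + 1) * p := by ring
    have k1 : cnt (progBlock T (n + 1)) N ≤ (N / p + 1) * T n := by
      calc cnt (progBlock T (n + 1)) N
          ≤ cnt (progBlock T (n + 1)) ((N / p + 1) * p) := cnt_mono _ (le_of_lt hub)
      _ = (N / p + 1) * cnt (progBlock T (n + 1)) p := cnt_mul_per (per_block h n) _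
      _ = (N / p + 1) * T n := by rw [cnt_block h n]
    have hq : (N / p) * p ≤ N := Nat.div_mul_le_self N p
    have hTn : κ (n + 1) * T n = p := (h.T_succ n).symm
    calc κ (n + 1) * cnt (progBlock T (n + 1)) N
        ≤ κ (n + 1) * ((N / p + 1) * T n) := Nat.mul_le_mul_left _ k1
    _ = (N / p) * (κ (n + 1) * T n) + κ (n + 1) * T n := by ring
    _ = (N / p) * p + p := by rw [hTn]
    _ ≤ N + 3 * N := by omega
    _ = 4 * N := by ring

/-- Union of the first `M` blocks (indices `1,...,M`). -/
def RU (T : ℕ → ℕ) (M : ℕ) : Set ℕ := {m | ∃ n < M, m ∈ progBlock T (n + 1)}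

lemma RU_succ (T : ℕ → ℕ) (M : ℕ) :
    RU T (M + 1) = RU T M ∪ progBlock T (M + 1) := by
  ext m
  simp only [RU, Set.mem_setOf_eq, Set.mem_union]
  constructor
  · rintro ⟨n, hn, hm⟩
    rcases Nat.lt_or_ge n M with h' | h'
    · exact Or.inl ⟨n, h', hm⟩
    · have : n = M := by omega
      subst this
      exact Or.inr hm
  · rintro (⟨n, hn, hm⟩ | hm)
    · exact ⟨n, by omega, hm⟩
    · exact ⟨M, by omega, hm⟩

lemma RU_subset_Rinfty (T : ℕ → ℕ) (M : ℕ) : RU T M ⊆ Rinfty T := by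
  rintro m ⟨n, _, hm⟩
  exact Set.mem_iUnion.mpr ⟨n, hm⟩

lemma RU_mono (T : ℕ → ℕ) {M M' : ℕ} (hMM : M ≤ M') : RU T M ⊆ RU T M' := by
  rintro m ⟨n, hn, hm⟩
  exact ⟨n, by omega, hm⟩

lemma per_RU (h : IsScale T κ) (M : ℕ) : Per (RU T M) (T M) := by
  intro m
  simp only [RU, Set.mem_setOf_eq]
  constructor
  · rintro ⟨n, hn, hm⟩
    exact ⟨n, hn, (per_of_dvd (per_block h n) (T_dvd h hn) m).mp hm⟩
  · rintro ⟨n, hn, hm⟩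
    exact ⟨n, hn, (per_of_dvd (per_block h n) (T_dvd h hn) m).mpr hm⟩

lemma cnt_RU_tail (h : IsScale T κ) (M N : ℕ) :
    ∀ K, M ≤ K → cnt (RU T K) N ≤ cnt (RU T M) N +
      ∑ n ∈ Finset.Ico M K, cnt (progBlock T (n + 1)) N := by
  intro K
  induction K with
  | zero => intro hK; rw [Nat.le_zero.mp hK]; simp
  | succ K ih =>
    intro hK
    rcases Nat.lt_or_ge M (K + 1) with h' | h'
    · have hMK : M ≤ K := by omega
      rw [RU_succ, Finset.sum_Ico_succ_top hMK]
      calc cnt (RU T K ∪ progBlock T (K + 1)) N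
          ≤ cnt (RU T K) N + cnt (progBlock T (K + 1)) N := cnt_union_le _ _ _
      _ ≤ (cnt (RU T M) N + ∑ n ∈ Finset.Ico M K, cnt (progBlock T (n + 1)) N) +
            cnt (progBlock T (K + 1)) N := by
            have := ih hMK
            omega
      _ = _ := by omega
    · have : M = K + 1 := by omega
      subst this
      simp

lemma cnt_Rinfty_eq (h : IsScale T κ) {K N : ℕ} (hK : 3 * N ≤ T (K + 1)) :
    cnt (Rinfty T) N = cnt (RU T K) N := by
  apply Nat.le_antisymm
  · apply cnt_le_of
    intro m hm hmem
    obtain ⟨j, hj⟩ := Set.mem_iUnion.mp hmem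
    rcases Nat.lt_or_ge j K with h' | h'
    · exact ⟨j, h', hj⟩
    · exfalso
      have h1 : T (K + 1) / 3 ≤ T (j + 1) / 3 :=
        Nat.div_le_div_right (T_mono h (by omega))
      have h2 := block_lower hj
      have h3 := T_div3 h (K + 1)
      omega
  · exact cnt_le_of _ _ _ (fun m _ hm => RU_subset_Rinfty T K hm)

lemma inv_kappa_le (h : IsScale T κ) (n : ℕ) :
    (1 : ℝ) / κ (n + 1) ≤ (1 / 3) ^ (n + 1) := by
  have h1 : (3 : ℝ) ^ (n + 1) ≤ κ (n + 1) := by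
    have h2 := kappa_pow h (n + 1)
    have h3 : (3 : ℕ) ^ (n + 1) ≤ 3 ^ (n + 2) := Nat.pow_le_pow_right (by norm_num) (by omega)
    exact_mod_cast le_trans h3 h2
  have hκ : (0 : ℝ) < κ (n + 1) := lt_of_lt_of_le (by positivity) h1
  rw [div_pow, one_pow, div_le_div_iff₀ hκ (by positivity)]
  nlinarith [pow_pos (show (0:ℝ) < 3 by norm_num) (n + 1)]

lemma summable_geo_aux : Summable (fun n : ℕ => ((1 : ℝ) / 3) ^ (n + 1)) := by
  have := (summable_geometric_of_lt_one (show (0:ℝ) ≤ 1/3 by norm_num)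
    (by norm_num)).mul_right (1 / 3)
  simpa [pow_succ] using this

lemma summable_inv_kappa (h : IsScale T κ) :
    Summable (fun n : ℕ => (1 : ℝ) / κ (n + 1)) :=
  Summable.of_nonneg_of_le (fun n => by positivity) (inv_kappa_le h) summable_geo_aux

lemma tsum_inv_kappa_le (h : IsScale T κ) :
    (∑' n : ℕ, (1 : ℝ) / κ (n + 1)) ≤ 1 / 2 := by
  have h1 : (∑' n : ℕ, (1 : ℝ) / κ (n + 1)) ≤ ∑' n : ℕ, ((1 : ℝ) / 3) ^ (n + 1) :=
    Summable.tsum_le_tsum (inv_kappa_le h) (summable_inv_kappa h) summable_geo_aux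
  have h2 : (∑' n : ℕ, ((1 : ℝ) / 3) ^ (n + 1)) = 1 / 2 := by
    have e : (fun n : ℕ => ((1 : ℝ) / 3) ^ (n + 1)) =
        fun n : ℕ => ((1 : ℝ) / 3) ^ n * (1 / 3) := by
      funext n; rw [pow_succ]
    rw [e, tsum_mul_right, tsum_geometric_of_lt_one (by norm_num) (by norm_num)]
    norm_num
  linarith

lemma sum_inv_kappa_Ico_le (h : IsScale T κ) (M K : ℕ) :
    (∑ n ∈ Finset.Ico M K, (1 : ℝ) / κ (n + 1)) ≤ (3 / 2) * (1 / 3) ^ M := by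
  calc (∑ n ∈ Finset.Ico M K, (1 : ℝ) / κ (n + 1))
      ≤ ∑ n ∈ Finset.Ico M K, ((1 : ℝ) / 3) ^ n := by
        apply Finset.sum_le_sum
        intro n _
        exact le_trans (inv_kappa_le h n)
          (pow_le_pow_of_le_one (by norm_num) (by norm_num) (by omega))
  _ = ∑ i ∈ Finset.range (K - M), ((1 : ℝ) / 3) ^ (M + i) := by
        rw [Finset.sum_Ico_eq_sum_range]
  _ = (1 / 3) ^ M * ∑ i ∈ Finset.range (K - M), ((1 : ℝ) / 3) ^ i := by
        rw [Finset.mul_sum]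
        congr 1
        funext i
        rw [pow_add]
  _ ≤ (1 / 3) ^ M * (3 / 2) := by
        apply mul_le_mul_of_nonneg_left _ (by positivity)
        have hle : (∑ i ∈ Finset.range (K - M), ((1 : ℝ) / 3) ^ i) ≤
            ∑' i : ℕ, ((1 : ℝ) / 3) ^ i := by
          apply Summable.sum_le_tsum
          · intro i _; positivity
          · exact summable_geometric_of_lt_one (by norm_num) (by norm_num)
        rw [tsum_geometric_of_lt_one (by norm_num) (by norm_num)] at hle
        calc (∑ i ∈ Finset.range (K - M), ((1 : ℝ) / 3) ^ i) ≤ (1 - 1/3 : ℝ)⁻¹ := hle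
        _ = 3 / 2 := by norm_num
  _ = (3 / 2) * (1 / 3) ^ M := by ring

lemma RU_zero_empty (T : ℕ → ℕ) : RU T 0 = (∅ : Set ℕ) := by
  ext m; simp [RU]

lemma cnt_empty (N : ℕ) : cnt (∅ : Set ℕ) N = 0 := by
  rw [cnt]; simp

lemma DM_le (h : IsScale T κ) (M : ℕ) :
    (cnt (RU T M) (T M) : ℝ) / T M ≤ ∑ n ∈ Finset.range M, (1 : ℝ) / κ (n + 1) := by
  have hTM : (0 : ℝ) < T M := by exact_mod_cast T_pos h M
  have hnat : cnt (RU T M) (T M) ≤ ∑ n ∈ Finset.range M, (T M / T (n + 1)) * T n := by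
    have h1 := cnt_RU_tail h 0 (T M) M (Nat.zero_le M)
    rw [RU_zero_empty, cnt_empty] at h1
    refine le_trans h1 ?_
    rw [Nat.zero_add, Finset.range_eq_Ico]
    apply Finset.sum_le_sum
    intro n hn
    simp only [Finset.mem_Ico] at hn
    have hd : T (n + 1) ∣ T M := T_dvd h (by omega)
    have heq : cnt (progBlock T (n + 1)) (T M) = (T M / T (n + 1)) * T n := by
      calc cnt (progBlock T (n + 1)) (T M)
          = cnt (progBlock T (n + 1)) ((T M / T (n + 1)) * T (n + 1)) := by
            rw [Nat.div_mul_cancel hd]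
      _ = (T M / T (n + 1)) * cnt (progBlock T (n + 1)) (T (n + 1)) :=
            cnt_mul_per (per_block h n) _
      _ = (T M / T (n + 1)) * T n := by rw [cnt_block h n]
    exact heq.le
  have hle : (cnt (RU T M) (T M) : ℝ) / T M ≤
      ((∑ n ∈ Finset.range M, (T M / T (n + 1)) * T n : ℕ) : ℝ) / T M := by
    have hc : ((cnt (RU T M) (T M) : ℕ) : ℝ) ≤
        ((∑ n ∈ Finset.range M, (T M / T (n + 1)) * T n : ℕ) : ℝ) := by
      exact_mod_cast hnat
    exact div_le_div_of_nonneg_right hc hTM.le |>.trans_eq rfl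
  refine le_trans hle (le_of_eq ?_)
  push_cast
  rw [Finset.sum_div]
  apply Finset.sum_congr rfl
  intro n hn
  simp only [Finset.mem_range] at hn
  have hd : T (n + 1) ∣ T M := T_dvd h (by omega)
  have hT1 : (0 : ℝ) < T (n + 1) := by exact_mod_cast T_pos h (n + 1)
  have hTn : (0 : ℝ) < T n := by exact_mod_cast T_pos h n
  have hκ : (0 : ℝ) < κ (n + 1) := by exact_mod_cast kappa_pos h (n + 1)
  rw [Nat.cast_div hd (by exact_mod_cast hT1.ne')]
  have hsucc : (T (n + 1) : ℝ) = κ (n + 1) * T n := by exact_mod_cast h.T_succ n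
  rw [hsucc]
  field_simp

lemma RU_one (T : ℕ → ℕ) : RU T 1 = progBlock T 1 := by
  ext m
  simp only [RU, Set.mem_setOf_eq]
  constructor
  · rintro ⟨n, hn, hm⟩
    have : n = 0 := by omega
    subst this
    exact hm
  · intro hm
    exact ⟨0, by omega, hm⟩

lemma DM_one (h : IsScale T κ) : (cnt (RU T 1) (T 1) : ℝ) / T 1 = 1 / κ 1 := by
  rw [RU_one, cnt_block h 0, h.T_succ 0]
  have hT0 : (0 : ℝ) < T 0 := by exact_mod_cast T_pos h 0
  have hκ : (0 : ℝ) < κ 1 := by exact_mod_cast kappa_pos h 1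
  push_cast
  field_simp

lemma cnt_Rinfty_le_real (h : IsScale T κ) (M N : ℕ) :
    (cnt (Rinfty T) N : ℝ) ≤ cnt (RU T M) N + 6 * N * (1 / 3) ^ M := by
  set K := M + 3 * N with hKdef
  have hK : 3 * N ≤ T (K + 1) := le_trans (by omega) (T_lin h (K + 1))
  rw [cnt_Rinfty_eq h hK]
  have h1 := cnt_RU_tail h M N K (by omega)
  have h2 : ∀ n ∈ Finset.Ico M K, (cnt (progBlock T (n + 1)) N : ℝ) ≤
      4 * N * (1 / κ (n + 1)) := by
    intro n _
    have hκ : (0 : ℝ) < κ (n + 1) := by exact_mod_cast kappa_pos h (n + 1)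
    have hnn := cnt_block_le h n N
    rw [Nat.mul_comm] at hnn
    rw [mul_one_div, le_div_iff₀ hκ]
    exact_mod_cast hnn
  have hNnn : (0 : ℝ) ≤ 4 * N := by positivity
  calc (cnt (RU T K) N : ℝ)
      ≤ cnt (RU T M) N + ∑ n ∈ Finset.Ico M K, (cnt (progBlock T (n + 1)) N : ℝ) := by
        exact_mod_cast h1
  _ ≤ cnt (RU T M) N + ∑ n ∈ Finset.Ico M K, 4 * (N : ℝ) * (1 / (κ (n + 1) : ℝ)) :=
        add_le_add le_rfl (Finset.sum_le_sum h2)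
  _ = cnt (RU T M) N + 4 * N * ∑ n ∈ Finset.Ico M K, (1 : ℝ) / κ (n + 1) := by
        rw [Finset.mul_sum]
  _ ≤ cnt (RU T M) N + 4 * N * ((3 / 2) * (1 / 3) ^ M) := by
        have := sum_inv_kappa_Ico_le h M K
        nlinarith
  _ = cnt (RU T M) N + 6 * N * (1 / 3) ^ M := by ring

lemma cnt_Rinfty_ge (T : ℕ → ℕ) (M N : ℕ) :
    cnt (RU T M) N ≤ cnt (Rinfty T) N :=
  cnt_le_of _ _ _ (fun m _ hm => RU_subset_Rinfty T M hm)

end DensityAux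

open DensityAux in
/-- The asymptotic density of `R_∞` exists and satisfies
`1/κ 1 ≤ d(R_∞) ≤ Σ_{n ≥ 1} 1/κ n < 1`; in particular `0 < d(R_∞) < 1`. -/
theorem density_rinfty (T κ : ℕ → ℕ) (h : IsScale T κ) :
    ∃ d : ℝ, HasDensity (Rinfty T) d ∧
      (1 : ℝ) / κ 1 ≤ d ∧ d ≤ (∑' n : ℕ, (1 : ℝ) / κ (n + 1)) ∧
      (∑' n : ℕ, (1 : ℝ) / κ (n + 1)) < 1 ∧ 0 < d ∧ d < 1 := by
  set S : ℝ := ∑' n : ℕ, (1 : ℝ) / κ (n + 1) with hS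
  set DM : ℕ → ℝ := fun M => (cnt (RU T M) (T M) : ℝ) / T M with hDM
  have htendRU : ∀ M, Filter.Tendsto (fun N => (cnt (RU T M) N : ℝ) / N)
      Filter.atTop (nhds (DM M)) :=
    fun M => tendsto_cnt_per (per_RU h M) (T_pos h M)
  have hmonoDM : Monotone DM := by
    intro M M' hMM'
    refine le_of_tendsto_of_tendsto' (htendRU M) (htendRU M') (fun N => ?_)
    have hc : cnt (RU T M) N ≤ cnt (RU T M') N :=
      cnt_le_of _ _ _ (fun m _ hm => RU_mono T hMM' hm)
    have hc' : ((cnt (RU T M) N : ℕ) : ℝ) ≤ ((cnt (RU T M') N : ℕ) : ℝ) := by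
      exact_mod_cast hc
    exact div_le_div_of_nonneg_right hc' (Nat.cast_nonneg N) |>.trans_eq rfl
  have hDM_le_S : ∀ M, DM M ≤ S := by
    intro M
    refine le_trans (DM_le h M) ?_
    exact Summable.sum_le_tsum (Finset.range M) (fun n _ => by positivity) (summable_inv_kappa h)
  have hbdd : BddAbove (Set.range DM) := by
    refine ⟨S, ?_⟩
    rintro x ⟨M, rfl⟩
    exact hDM_le_S M
  set d : ℝ := ⨆ M, DM M with hd
  have htendDM : Filter.Tendsto DM Filter.atTop (nhds d) :=
    tendsto_atTop_ciSup hmonoDM hbdd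
  have hd_le_S : d ≤ S := ciSup_le hDM_le_S
  have hd_ge : (1 : ℝ) / κ 1 ≤ d := by
    have h1 : DM 1 ≤ d := le_ciSup hbdd 1
    have h2 : DM 1 = 1 / κ 1 := DM_one h
    linarith
  have hS_le : S ≤ 1 / 2 := tsum_inv_kappa_le h
  have hκ1 : (0 : ℝ) < κ 1 := by exact_mod_cast kappa_pos h 1
  have hd_pos : 0 < d := lt_of_lt_of_le (by positivity) hd_ge
  -- the main density statement
  have hmain : HasDensity (Rinfty T) d := by
    have hfe : (fun N => (Nat.card ↥(Rinfty T ∩ Set.Iio N) : ℝ) / N) =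
        fun N => (cnt (Rinfty T) N : ℝ) / N := by
      funext N
      rw [natCard_eq_cnt]
    rw [HasDensity, hfe, Metric.tendsto_atTop]
    intro ε hε
    obtain ⟨M1, hM1⟩ := Metric.tendsto_atTop.mp htendDM (ε / 4) (by positivity)
    obtain ⟨M2, hM2⟩ := exists_pow_lt_of_lt_one
      (show (0 : ℝ) < ε / 12 by positivity) (show (1:ℝ)/3 < 1 by norm_num)
    set M := max M1 M2 with hM
    have hpowM : (6 : ℝ) * (1 / 3) ^ M < ε / 2 := by
      have h1 : ((1 : ℝ) / 3) ^ M ≤ (1 / 3) ^ M2 :=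
        pow_le_pow_of_le_one (by norm_num) (by norm_num) (le_max_right M1 M2)
      nlinarith
    obtain ⟨N0, hN0⟩ := Metric.tendsto_atTop.mp (htendRU M) (ε / 4) (by positivity)
    refine ⟨max N0 1, fun N hN => ?_⟩
    have hN1 : 1 ≤ N := le_trans (le_max_right N0 1) hN
    have hNpos : (0 : ℝ) < N := by exact_mod_cast hN1
    have d1 : dist ((cnt (RU T M) N : ℝ) / N) (DM M) < ε / 4 :=
      hN0 N (le_trans (le_max_left N0 1) hN)
    have d2 : dist (DM M) d < ε / 4 := hM1 M (le_max_left M1 M2)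
    have hup : (cnt (Rinfty T) N : ℝ) ≤ cnt (RU T M) N + 6 * N * (1 / 3) ^ M :=
      cnt_Rinfty_le_real h M N
    have hlo : (cnt (RU T M) N : ℝ) ≤ cnt (Rinfty T) N := by
      exact_mod_cast cnt_Rinfty_ge T M N
    have e1 : (cnt (RU T M) N : ℝ) / N ≤ (cnt (Rinfty T) N : ℝ) / N :=
      div_le_div_of_nonneg_right hlo (Nat.cast_nonneg N)
    have e2 : (cnt (Rinfty T) N : ℝ) / N ≤
        (cnt (RU T M) N : ℝ) / N + 6 * (1 / 3) ^ M := by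
      have e3 := div_le_div_of_nonneg_right hup (Nat.cast_nonneg N)
      have e4 : ((cnt (RU T M) N : ℝ) + 6 * N * (1 / 3) ^ M) / N =
          (cnt (RU T M) N : ℝ) / N + 6 * (1 / 3) ^ M := by
        rw [add_div]
        congr 1
        field_simp
      linarith
    have d3 : dist ((cnt (Rinfty T) N : ℝ) / N) ((cnt (RU T M) N : ℝ) / N) < ε / 2 := by
      rw [Real.dist_eq, abs_of_nonneg (by linarith)]
      linarith
    calc dist ((cnt (Rinfty T) N : ℝ) / N) d
        ≤ dist ((cnt (Rinfty T) N : ℝ) / N) ((cnt (RU T M) N : ℝ) / N) +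
          dist ((cnt (RU T M) N : ℝ) / N) (DM M) + dist (DM M) d :=
          dist_triangle4 _ _ _ _
    _ < ε / 2 + ε / 4 + ε / 4 := by linarith
    _ = ε := by ring
  refine ⟨d, hmain, hd_ge, hd_le_S, by linarith, hd_pos, by linarith⟩
end
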